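/- Let M = p_i^{n_i} p_j^{n_j} p_k^{n_k} with p_i, p_j, p_k distinct primes. Assume A ⊕ B = ℤ_M and |A| = p_i^{β_i} p_j^{β_j} p_k^{β_k} with β_i > 0. Suppose that for some x ∈ ℤ_M and some 1 ≤ α_0 ≤ n_i one has |A ∩ Π(x, p_i^{n_i−α_0})| > p_i^{β_i−1} p_j^{β_j} p_k^{β_k}. Then Φ_{p_i^{n_i−α}} | A for at least one α ∈ {0, 1, …, α_0−1}. -/

import Mathlib

open Polynomial

/-- The mask polynomial `A(X) = Σ_{a ∈ A} X^a` of a finite subset of `ZMod M`,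
using the representatives in `{0, …, M-1}`. -/
noncomputable def maskPoly (M : ℕ) (A : Finset (ZMod M)) : Polynomial ℤ :=
  ∑ a ∈ A, X ^ a.val

/-- `Φ_s | A` : the `s`-th cyclotomic polynomial divides the mask polynomial of `A` in `ℤ[X]`. -/
def cycDvd (M s : ℕ) (A : Finset (ZMod M)) : Prop :=
  cyclotomic s ℤ ∣ maskPoly M A

/-- `A ⊕ B = ℤ_M` : every element of `ℤ_M` has a unique representation `a + b`
with `a ∈ A` and `b ∈ B`. -/
def IsTiling (M : ℕ) (A B : Set (ZMod M)) : Prop :=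
  ∀ z : ZMod M, ∃! ab : ZMod M × ZMod M, ab.1 ∈ A ∧ ab.2 ∈ B ∧ ab.1 + ab.2 = z

/-- The Coven–Meyerowitz property (T2): whenever `s_1, …, s_m` are prime powers dividing `M`,
powers of pairwise distinct primes, with `Φ_{s_t} | A` for each `t`, then `Φ_{s_1 ⋯ s_m} | A`. -/
def SatisfiesT2 (M : ℕ) (A : Finset (ZMod M)) : Prop :=
  ∀ (P : Finset ℕ) (e : ℕ → ℕ), P.Nonempty →
    (∀ p ∈ P, p.Prime ∧ 1 ≤ e p ∧ p ^ e p ∣ M ∧ cycDvd M (p ^ e p) A) →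
    cycDvd M (∏ p ∈ P, p ^ e p) A

/-- The `D`-grid through `x` in `ZMod M` : `Λ(x, D) = {y : D ∣ y - x}`. -/
def gridSet (M : ℕ) (x : ZMod M) (D : ℕ) : Set (ZMod M) :=
  {y : ZMod M | (D : ZMod M) ∣ (y - x)}

/-- `S` is fibered in the `p` direction on scale `M`: every element of `S` has its whole
fiber `Λ(s, M/p)` contained in `S`. -/
def Fibered (M p : ℕ) (S : Set (ZMod M)) : Prop :=
  ∀ s ∈ S, gridSet M s (M / p) ⊆ S

/-- `Div_N(S)` : the set of values `(s - s', N) = gcd(s - s', N)` for `s, s' ∈ S`. -/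
def DivSet (M N : ℕ) (S : Set (ZMod M)) : Set ℕ :=
  {m : ℕ | ∃ s ∈ S, ∃ s' ∈ S, Nat.gcd (s - s').val N = m}

private lemma dvd_pow_mod (n v : ℕ) : (X ^ n - 1 : ℤ[X]) ∣ X ^ v - X ^ (v % n) := by
  have heq : (X ^ v - X ^ (v % n) : ℤ[X]) = ((X ^ n) ^ (v / n) - 1) * X ^ (v % n) := by
    rw [sub_mul, one_mul, ← pow_mul, ← pow_add, Nat.div_add_mod]
  rw [heq]
  exact Dvd.dvd.mul_right (by simpa using sub_dvd_pow_sub_pow (X ^ n : ℤ[X]) 1 (v / n)) _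

private lemma fiber_bound {M p : ℕ} (hp : p.Prime) {s : ℕ} (hs : 1 ≤ s)
    (S : Finset (ZMod M)) (hdvd : cyclotomic (p ^ s) ℤ ∣ maskPoly M S) (t : ℕ) :
    p * (S.filter (fun a => a.val % p ^ s = t)).card ≤ S.card := by
  obtain ⟨m, rfl⟩ : ∃ m, s = m + 1 := ⟨s - 1, by omega⟩
  set q : ℕ := p ^ m with hq
  set N : ℕ := p ^ (m + 1) with hN
  have hNq : N = q * p := by rw [hN, hq, pow_succ]
  have hq0 : 0 < q := pow_pos hp.pos m
  have hN0 : 0 < N := pow_pos hp.pos _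
  set G : ℤ[X] := ∑ a ∈ S, X ^ (a.val % N) with hG
  have hGdvd : cyclotomic N ℤ ∣ G := by
    have h1 : (X ^ N - 1 : ℤ[X]) ∣ maskPoly M S - G := by
      rw [maskPoly, hG, ← Finset.sum_sub_distrib]
      exact Finset.dvd_sum fun a _ => dvd_pow_mod N a.val
    have h2 : cyclotomic N ℤ ∣ maskPoly M S - G :=
      (cyclotomic.dvd_X_pow_sub_one N ℤ).trans h1
    simpa using dvd_sub hdvd h2
  have hcoeff : ∀ u : ℕ,
      G.coeff u = ((S.filter fun a => a.val % N = u).card : ℤ) := by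
    intro u
    rw [hG, finset_sum_coeff, Finset.card_filter]
    push_cast
    refine Finset.sum_congr rfl fun a _ => ?_
    rw [coeff_X_pow]
    simp [eq_comm]
  obtain ⟨c, hc⟩ := hGdvd
  have htotal : S.card = ∑ u ∈ Finset.range N, (S.filter fun a => a.val % N = u).card :=
    Finset.card_eq_sum_card_fiberwise fun a _ => Finset.mem_range.mpr (Nat.mod_lt _ hN0)
  by_cases hc0 : c = 0
  · have hzero : ∀ u, (S.filter fun a => a.val % N = u).card = 0 := by
      intro u
      have h3 := hcoeff u
      rw [hc, hc0, mul_zero, coeff_zero] at h3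
      exact_mod_cast h3.symm
    simp [hzero]
  · have hΦ0 : (cyclotomic N ℤ) ≠ 0 := cyclotomic_ne_zero N ℤ
    have hG0 : G ≠ 0 := by rw [hc]; exact mul_ne_zero hΦ0 hc0
    have hcoeffN : ∀ u, N ≤ u → G.coeff u = 0 := by
      intro u hu
      rw [hcoeff]
      norm_cast
      rw [Finset.card_eq_zero, Finset.filter_eq_empty_iff]
      intro a _
      exact fun h => absurd h (by have := Nat.mod_lt a.val hN0 (y := N); omega)
    have hdegG : G.natDegree < N := by
      by_contra hcon
      push_neg at hcon
      exact hG0 (Polynomial.leadingCoeff_eq_zero.mp (hcoeffN _ hcon))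
    have hdegΦ : (cyclotomic N ℤ).natDegree = q * (p - 1) := by
      rw [natDegree_cyclotomic, hN, Nat.totient_prime_pow hp (Nat.succ_pos m)]
      simp [hq]
    have hNsplit : N = (cyclotomic N ℤ).natDegree + q := by
      rw [hdegΦ]
      have h4 : q * (p - 1) + q = q * (p - 1 + 1) := (Nat.mul_succ q (p - 1)).symm
      rw [h4, Nat.sub_add_cancel hp.one_le, ← hNq]
    have hdegc : c.natDegree < q := by
      have h1 : G.natDegree = (cyclotomic N ℤ).natDegree + c.natDegree := by
        rw [hc]; exact natDegree_mul hΦ0 hc0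
      have h2 : (cyclotomic N ℤ).natDegree + c.natDegree
          < (cyclotomic N ℤ).natDegree + q := by
        rw [← h1, ← hNsplit]; exact hdegG
      exact Nat.lt_of_add_lt_add_left h2
    have hfiber : ∀ u j : ℕ, u < q → j < p → G.coeff (u + j * q) = c.coeff u := by
      intro u j hu hj
      have hΦ : cyclotomic N ℤ = ∑ i ∈ Finset.range p, X ^ (q * i) := by
        rw [hN, cyclotomic_prime_pow_eq_geom_sum hp]
        exact Finset.sum_congr rfl fun i _ => by rw [← pow_mul, hq]
      rw [hc, hΦ, Finset.sum_mul, finset_sum_coeff, Finset.sum_eq_single j]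
      · rw [mul_comm ((X : ℤ[X]) ^ (q * j)) c, mul_comm q j, coeff_mul_X_pow]
      · intro i _ hij
        rw [mul_comm ((X : ℤ[X]) ^ (q * i)) c, coeff_mul_X_pow']
        rcases lt_or_gt_of_ne hij with h | h
        · obtain ⟨k, rfl⟩ : ∃ k, j = i + (k + 1) := ⟨j - i - 1, by omega⟩
          have hcond : q * i ≤ u + (i + (k + 1)) * q := by
            calc q * i = i * q := mul_comm q i
            _ ≤ (i + (k + 1)) * q := Nat.mul_le_mul_right q (Nat.le_add_right i _)
            _ ≤ u + (i + (k + 1)) * q := Nat.le_add_left _ _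
          rw [if_pos hcond]
          have heq2 : u + (i + (k + 1)) * q - q * i = u + (k + 1) * q := by
            have h7 : u + (i + (k + 1)) * q = u + (k + 1) * q + q * i := by ring
            rw [h7, Nat.add_sub_cancel]
          rw [heq2]
          refine coeff_eq_zero_of_natDegree_lt (lt_of_lt_of_le hdegc ?_)
          calc q ≤ (k + 1) * q := Nat.le_mul_of_pos_left q k.succ_pos
          _ ≤ u + (k + 1) * q := Nat.le_add_left _ _
        · obtain ⟨k, rfl⟩ : ∃ k, i = j + (k + 1) := ⟨i - j - 1, by omega⟩
          rw [if_neg]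
          intro hcon
          have h8 : q * (j + (k + 1)) = j * q + (k * q + q) := by ring
          rw [h8] at hcon
          have h9 : u + j * q < j * q + (k * q + q) := by
            rw [add_comm u (j * q)]
            exact Nat.add_lt_add_left (lt_of_lt_of_le hu (Nat.le_add_left q (k * q))) _
          omega
      · intro hjmem
        exact absurd (Finset.mem_range.mpr hj) hjmem
    by_cases ht : t < N
    · set u := t % q with hu
      set j := t / q with hj
      have hult : u < q := Nat.mod_lt _ hq0
      have hjp : j < p := by
        rw [hj]
        exact (Nat.div_lt_iff_lt_mul hq0).mpr (by rw [mul_comm, ← hNq]; exact ht)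
      have hteq : u + j * q = t := by
        rw [hu, hj, mul_comm]; exact Nat.mod_add_div t q
      have hval : ∀ j', j' < p →
          ((S.filter fun a => a.val % N = u + j' * q).card : ℤ) = c.coeff u := by
        intro j' hj'
        rw [← hcoeff, hfiber u j' hult hj']
      have hvt : ((S.filter fun a => a.val % N = t).card : ℤ) = c.coeff u := by
        rw [← hteq]; exact hval j hjp
      have hsum : ∑ j' ∈ Finset.range p, (S.filter fun a => a.val % N = u + j' * q).card
          = p * (S.filter fun a => a.val % N = t).card := by
        rw [Finset.sum_congr rfl (fun j' hj' => ?_), Finset.sum_const, Finset.card_range,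
          smul_eq_mul]
        have h10 := (hval j' (Finset.mem_range.mp hj')).trans hvt.symm
        exact_mod_cast h10
      have himg : (Finset.range p).image (fun j' => u + j' * q) ⊆ Finset.range N := by
        intro v hv
        obtain ⟨j', hj', rfl⟩ := Finset.mem_image.mp hv
        have hj'p := Finset.mem_range.mp hj'
        refine Finset.mem_range.mpr ?_
        calc u + j' * q < q + j' * q := Nat.add_lt_add_right hult _
        _ = (j' + 1) * q := by ring
        _ ≤ p * q := Nat.mul_le_mul_right q hj'p
        _ = N := by rw [hNq, mul_comm]
      have hinjsum : ∑ j' ∈ Finset.range p, (S.filter fun a => a.val % N = u + j' * q).card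
          = ∑ v ∈ (Finset.range p).image (fun j' => u + j' * q),
              (S.filter fun a => a.val % N = v).card := by
        rw [Finset.sum_image]
        intro a _ b _ hab
        have h11 : a * q = b * q := by simp only at hab; omega
        exact Nat.eq_of_mul_eq_mul_right hq0 h11
      calc p * (S.filter fun a => a.val % N = t).card
          = ∑ j' ∈ Finset.range p, (S.filter fun a => a.val % N = u + j' * q).card := hsum.symm
      _ = ∑ v ∈ (Finset.range p).image (fun j' => u + j' * q),
            (S.filter fun a => a.val % N = v).card := hinjsum
      _ ≤ ∑ v ∈ Finset.range N, (S.filter fun a => a.val % N = v).card :=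
          Finset.sum_le_sum_of_subset himg
      _ = S.card := htotal.symm
    · have hempty : (S.filter fun a => a.val % N = t) = ∅ := by
        rw [Finset.filter_eq_empty_iff]
        intro a _
        have := Nat.mod_lt a.val hN0 (y := N)
        omega
      simp [hempty]

private lemma tiling_sum_eq (M : ℕ) [NeZero M] (A B : Finset (ZMod M))
    (htile : IsTiling M (A : Set (ZMod M)) (B : Set (ZMod M))) :
    ∑ ab ∈ A ×ˢ B, (X : ℤ[X]) ^ ((ab.1 + ab.2).val)
      = ∑ z ∈ (Finset.univ : Finset (ZMod M)), (X : ℤ[X]) ^ z.val := by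
  refine Finset.sum_bij (fun ab _ => ab.1 + ab.2) (fun ab _ => Finset.mem_univ _)
    ?_ ?_ (fun ab _ => rfl)
  · intro a ha b hb hab
    have h1 := Finset.mem_product.mp ha
    have h2 := Finset.mem_product.mp hb
    exact (htile (a.1 + a.2)).unique ⟨h1.1, h1.2, rfl⟩ ⟨h2.1, h2.2, hab.symm⟩
  · intro z _
    obtain ⟨ab, ⟨ha, hb, hsum⟩, -⟩ := htile z
    exact ⟨ab, Finset.mem_product.mpr ⟨ha, hb⟩, hsum⟩

private lemma sum_univ_eq (M : ℕ) [NeZero M] :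
    ∑ z ∈ (Finset.univ : Finset (ZMod M)), (X : ℤ[X]) ^ z.val
      = ∑ i ∈ Finset.range M, (X : ℤ[X]) ^ i := by
  refine Finset.sum_nbij' (fun z => z.val) (fun i => (i : ZMod M))
    (fun z _ => Finset.mem_range.mpr (ZMod.val_lt z)) (fun i _ => Finset.mem_univ _)
    (fun z _ => ZMod.natCast_rightInverse z)
    (fun i hi => ZMod.val_cast_of_lt (Finset.mem_range.mp hi)) (fun z _ => rfl)

private lemma tiling_dvd_mask_mul (M : ℕ) (hM : 0 < M) (A B : Finset (ZMod M))
    (htile : IsTiling M (A : Set (ZMod M)) (B : Set (ZMod M))) {s : ℕ} (hsM : s ∣ M)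
    (hs1 : s ≠ 1) : cyclotomic s ℤ ∣ maskPoly M A * maskPoly M B := by
  haveI : NeZero M := ⟨hM.ne'⟩
  have hprod : maskPoly M A * maskPoly M B
      = ∑ ab ∈ A ×ˢ B, (X : ℤ[X]) ^ (ab.1.val + ab.2.val) := by
    rw [maskPoly, maskPoly, Finset.sum_mul_sum, ← Finset.sum_product']
    exact Finset.sum_congr rfl fun ab _ => (pow_add _ _ _).symm
  have hdvd1 : (X ^ M - 1 : ℤ[X]) ∣ maskPoly M A * maskPoly M B
      - ∑ ab ∈ A ×ˢ B, (X : ℤ[X]) ^ ((ab.1 + ab.2).val) := by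
    rw [hprod, ← Finset.sum_sub_distrib]
    refine Finset.dvd_sum fun ab _ => ?_
    rw [ZMod.val_add]
    exact dvd_pow_mod M _
  rw [tiling_sum_eq M A B htile, sum_univ_eq M] at hdvd1
  have h2 : cyclotomic s ℤ ∣ ∑ i ∈ Finset.range M, (X : ℤ[X]) ^ i :=
    cyclotomic_dvd_geom_sum_of_dvd ℤ hsM hs1
  have h3 : cyclotomic s ℤ ∣ (X ^ M - 1 : ℤ[X]) := by
    obtain ⟨k, rfl⟩ := hsM
    refine (cyclotomic.dvd_X_pow_sub_one s ℤ).trans ?_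
    have h4 := sub_dvd_pow_sub_pow (X ^ s : ℤ[X]) 1 k
    simpa [← pow_mul] using h4
  have h5 := dvd_add (h3.trans hdvd1) h2
  simpa [sub_add_cancel] using h5

private lemma tiling_card (M : ℕ) (hM : 0 < M) (A B : Finset (ZMod M))
    (htile : IsTiling M (A : Set (ZMod M)) (B : Set (ZMod M))) :
    A.card * B.card = M := by
  haveI : NeZero M := ⟨hM.ne'⟩
  have h : (A ×ˢ B).card = (Finset.univ : Finset (ZMod M)).card := by
    refine Finset.card_bij (fun ab _ => ab.1 + ab.2) (fun ab _ => Finset.mem_univ _) ?_ ?_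
    · intro a ha b hb hab
      have h1 := Finset.mem_product.mp ha
      have h2 := Finset.mem_product.mp hb
      exact (htile (a.1 + a.2)).unique ⟨h1.1, h1.2, rfl⟩ ⟨h2.1, h2.2, hab.symm⟩
    · intro z _
      obtain ⟨ab, ⟨ha, hb, hsum⟩, -⟩ := htile z
      exact ⟨ab, Finset.mem_product.mpr ⟨ha, hb⟩, hsum⟩
  rwa [Finset.card_product, Finset.card_univ, ZMod.card] at h

private lemma prod_cyc_dvd {p : ℕ} (hp : p.Prime) (F : Polynomial ℤ) (n : ℕ)
    (h : ∀ s, 1 ≤ s → s ≤ n → cyclotomic (p ^ s) ℤ ∣ F) :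
    (∏ i ∈ Finset.range n, cyclotomic (p ^ (i + 1)) ℤ) ∣ F := by
  induction n with
  | zero => simpa using one_dvd F
  | succ n ih =>
    obtain ⟨c, hc⟩ := ih fun s h1 h2 => h s h1 (h2.trans (Nat.le_succ n))
    have hΦ : cyclotomic (p ^ (n + 1)) ℤ ∣ F := h (n + 1) (by omega) le_rfl
    have hprime : Prime (cyclotomic (p ^ (n + 1)) ℤ) :=
      (cyclotomic.irreducible (pow_pos hp.pos _)).prime
    have hnd : ¬ cyclotomic (p ^ (n + 1)) ℤ ∣ ∏ i ∈ Finset.range n, cyclotomic (p ^ (i + 1)) ℤ := by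
      intro hdvd
      obtain ⟨i, hi, hdvd2⟩ := hprime.exists_mem_finset_dvd hdvd
      have hideg := Polynomial.degree_le_of_dvd hdvd2 (cyclotomic_ne_zero _ ℤ)
      rw [degree_cyclotomic, degree_cyclotomic, Nat.cast_le,
        Nat.totient_prime_pow hp (Nat.succ_pos n), Nat.totient_prime_pow hp (Nat.succ_pos i)]
        at hideg
      simp only [Nat.succ_sub_one] at hideg
      have hi' : i < n := Finset.mem_range.mp hi
      have hlt : p ^ i * (p - 1) < p ^ n * (p - 1) :=
        (Nat.mul_lt_mul_right (by have := hp.one_lt; omega)).mpr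
          (Nat.pow_lt_pow_right hp.one_lt hi')
      omega
    have hcdvd : cyclotomic (p ^ (n + 1)) ℤ ∣ c := by
      rcases hprime.2.2 _ _ (hc ▸ hΦ) with h' | h'
      · exact absurd h' hnd
      · exact h'
    obtain ⟨e, he⟩ := hcdvd
    rw [Finset.prod_range_succ, hc, he]
    exact ⟨e, by ring⟩

private lemma mask_eval_one (M : ℕ) (S : Finset (ZMod M)) :
    (maskPoly M S).eval 1 = S.card := by
  rw [maskPoly, eval_finset_sum]
  simp

/-- Let `M = p_i^{n_i} p_j^{n_j} p_k^{n_k}`, `A ⊕ B = ℤ_M`,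
`|A| = p_i^{β_i} p_j^{β_j} p_k^{β_k}` with `β_i > 0`. If for some `x` and `1 ≤ α₀ ≤ n_i` one
has `|A ∩ Π(x, p_i^{n_i-α₀})| > p_i^{β_i-1} p_j^{β_j} p_k^{β_k}`, then `Φ_{p_i^{n_i-α}} | A`
for some `α ∈ {0, …, α₀ - 1}`. -/
theorem statement6
    (pi pj pk : ℕ) (hpi : pi.Prime) (hpj : pj.Prime) (hpk : pk.Prime)
    (hij : pi ≠ pj) (hik : pi ≠ pk) (hjk : pj ≠ pk)
    (ni nj nk : ℕ) (hni : 1 ≤ ni) (hnj : 1 ≤ nj) (hnk : 1 ≤ nk)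
    (M : ℕ) (hM : M = pi ^ ni * pj ^ nj * pk ^ nk)
    (A B : Finset (ZMod M))
    (htile : IsTiling M (A : Set (ZMod M)) (B : Set (ZMod M)))
    (bi bj bk : ℕ) (hbi : 0 < bi)
    (hcardA : A.card = pi ^ bi * pj ^ bj * pk ^ bk)
    (x : ZMod M) (a0 : ℕ) (ha0 : 1 ≤ a0) (ha0' : a0 ≤ ni)
    (hbig : pi ^ (bi - 1) * pj ^ bj * pk ^ bk <
      ((A : Set (ZMod M)) ∩ gridSet M x (pi ^ (ni - a0))).ncard) :
    ∃ a < a0, cycDvd M (pi ^ (ni - a)) A := by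
  by_contra hcon
  push_neg at hcon
  have hM0 : 0 < M := by
    rw [hM]
    exact Nat.mul_pos (Nat.mul_pos (pow_pos hpi.pos _) (pow_pos hpj.pos _)) (pow_pos hpk.pos _)
  haveI : NeZero M := ⟨hM0.ne'⟩
  set d := ni - a0 with hd
  by_cases hcase : ∃ s, 1 ≤ s ∧ s ≤ d ∧ cycDvd M (pi ^ s) A
  · -- case (i) : some low-level cyclotomic divides A; contradict hbig
    obtain ⟨s, hs1, hsd, hdvdA⟩ := hcase
    haveI : NeZero (pi ^ s) := ⟨(pow_pos hpi.pos s).ne'⟩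
    have hpsM : (pi : ℕ) ^ s ∣ M := by
      rw [hM]
      exact dvd_mul_of_dvd_left
        (dvd_mul_of_dvd_left (pow_dvd_pow pi (hsd.trans (Nat.sub_le ni a0))) _) _
    have hsub : ((A : Set (ZMod M)) ∩ gridSet M x (pi ^ d)) ⊆
        ↑(A.filter (fun a => a.val % pi ^ s = x.val % pi ^ s)) := by
      rintro a ⟨haA, hagrid⟩
      obtain ⟨e, he⟩ := hagrid
      have hge : a = x + ((pi ^ d : ℕ) : ZMod M) * e := by rw [← he]; ring
      set f := ZMod.castHom hpsM (ZMod (pi ^ s)) with hf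
      have hzero : ((pi ^ d : ℕ) : ZMod (pi ^ s)) = 0 :=
        (ZMod.natCast_eq_zero_iff _ _).mpr (pow_dvd_pow pi hsd)
      have hfa : f a = f x := by
        rw [hge, map_add, map_mul, map_natCast, hzero, zero_mul, add_zero]
      have hmod : a.val % pi ^ s = x.val % pi ^ s := by
        have h1 : ((a.val : ℕ) : ZMod (pi ^ s)) = ((x.val : ℕ) : ZMod (pi ^ s)) := by
          rw [ZMod.natCast_val, ZMod.natCast_val]
          exact hfa
        exact (ZMod.natCast_eq_natCast_iff' _ _ _).mp h1
      simp only [Finset.coe_filter, Set.mem_setOf_eq]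
      exact ⟨haA, hmod⟩
    have h1 : ((A : Set (ZMod M)) ∩ gridSet M x (pi ^ d)).ncard
        ≤ (A.filter (fun a => a.val % pi ^ s = x.val % pi ^ s)).card := by
      have h2 := Set.ncard_le_ncard hsub (Finset.finite_toSet _)
      rwa [Set.ncard_coe_finset] at h2
    have h2 := fiber_bound hpi hs1 A hdvdA (x.val % pi ^ s)
    rw [hcardA] at h2
    have hlt : pi ^ (bi - 1) * pj ^ bj * pk ^ bk
        < (A.filter (fun a => a.val % pi ^ s = x.val % pi ^ s)).card :=
      lt_of_lt_of_le hbig h1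
    have h3 : pi * (pi ^ (bi - 1) * pj ^ bj * pk ^ bk)
        < pi * (A.filter (fun a => a.val % pi ^ s = x.val % pi ^ s)).card :=
      mul_lt_mul_of_pos_left hlt hpi.pos
    have hpow : pi * (pi ^ (bi - 1) * pj ^ bj * pk ^ bk) = pi ^ bi * pj ^ bj * pk ^ bk := by
      have : pi * pi ^ (bi - 1) = pi ^ bi := by
        rw [← pow_succ']
        congr 1
        omega
      rw [← mul_assoc, ← mul_assoc, this]
    rw [hpow] at h3
    exact absurd (h3.trans_le h2) (lt_irrefl _)
  · -- case (ii) : all Φ_{pi^s} divide B, contradict the size of B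
    have hB : ∀ s, 1 ≤ s → s ≤ ni → cyclotomic (pi ^ s) ℤ ∣ maskPoly M B := by
      intro s h1 h2
      have hsM : (pi : ℕ) ^ s ∣ M := by
        rw [hM]
        exact dvd_mul_of_dvd_left (dvd_mul_of_dvd_left (pow_dvd_pow pi h2) _) _
      have hs1 : (pi : ℕ) ^ s ≠ 1 :=
        (Nat.one_lt_pow (by omega) hpi.one_lt).ne'
      have hdvdAB := tiling_dvd_mask_mul M hM0 A B htile hsM hs1
      have hprime : Prime (cyclotomic (pi ^ s) ℤ) :=
        (cyclotomic.irreducible (pow_pos hpi.pos _)).prime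
      rcases hprime.2.2 _ _ hdvdAB with hA | hB'
      · exfalso
        by_cases hsd : s ≤ d
        · exact hcase ⟨s, h1, hsd, hA⟩
        · have hseq : ni - (ni - s) = s := by omega
          exact hcon (ni - s) (by omega) (by rw [hseq]; exact hA)
      · exact hB'
    have hprod := prod_cyc_dvd hpi (maskPoly M B) ni hB
    haveI : Fact pi.Prime := ⟨hpi⟩
    have heval : ((pi : ℤ)) ^ ni ∣ (B.card : ℤ) := by
      have h1 := Polynomial.eval_dvd (x := (1 : ℤ)) hprod
      rw [mask_eval_one, Polynomial.eval_prod] at h1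
      simp only [eval_one_cyclotomic_prime_pow] at h1
      rwa [Finset.prod_const, Finset.card_range] at h1
    have hdvdnat : pi ^ ni ∣ B.card := by exact_mod_cast heval
    obtain ⟨b', hb'⟩ := hdvdnat
    obtain ⟨b2, hb2⟩ : ∃ b2, bi = b2 + 1 := ⟨bi - 1, by omega⟩
    have hcardM := tiling_card M hM0 A B htile
    have hdvd2 : pi ^ (ni + 1) ∣ M := by
      rw [← hcardM, hcardA, hb', hb2]
      exact ⟨pi ^ b2 * pj ^ bj * pk ^ bk * b', by ring⟩
    rw [hM, mul_assoc] at hdvd2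
    have h6 : pi ^ ni * pi ∣ pi ^ ni * (pj ^ nj * pk ^ nk) := by
      rw [← pow_succ]
      exact hdvd2
    have h5 : pi ∣ pj ^ nj * pk ^ nk :=
      (Nat.mul_dvd_mul_iff_left (pow_pos hpi.pos ni)).mp h6
    rcases (Nat.Prime.dvd_mul hpi).mp h5 with h | h
    · exact hij ((Nat.prime_dvd_prime_iff_eq hpi hpj).mp (hpi.dvd_of_dvd_pow h))
    · exact hik ((Nat.prime_dvd_prime_iff_eq hpi hpk).mp (hpi.dvd_of_dvd_pow h))
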